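/- Let 0 < s < 1 and 1 ≤ p < ∞ with sp < 1, let b₀, b₁ ∈ ℝ^m, and for j ∈ ℕ, j ≥ 1, define u_j : (0,1) → ℝ^m by u_j(x) = b₀ if jx ∈ [2k, 2k+1) for some integer k, and u_j(x) = b₁ if jx ∈ [2k+1, 2k+2) for some integer k. Then ∬_{(0,1)×(0,1)} |u_j(y) − u_j(x)|^p / |y − x|^{1+sp} dy dx ≥ 2 (1 − 1/j) j^{sp} (1 − 2^{−sp}) |b₁ − b₀|^p / (sp(1 − sp)). -/

import Mathlib

open MeasureTheory Set
open scoped ENNReal NNReal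

/-- The oscillating step function `u_j` taking value `b₀` on `[2k/j, (2k+1)/j)` and `b₁` on
`[(2k+1)/j, (2k+2)/j)`: `u_j(x) = b₀` iff `⌊j x⌋` is even. -/
noncomputable def uj {m : ℕ} (b₀ b₁ : EuclideanSpace ℝ (Fin m)) (j : ℕ) (x : ℝ) :
    EuclideanSpace ℝ (Fin m) :=
  if Even ⌊(j : ℝ) * x⌋ then b₀ else b₁

lemma uj_norm_aux {m : ℕ} (b₀ b₁ : EuclideanSpace ℝ (Fin m)) (j k : ℕ) (hj : 0 < j)
    {x y : ℝ} (hx : x ∈ Ioo ((k : ℝ) / j) ((k + 1 : ℝ) / j))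
    (hy : y ∈ Ioo ((k + 1 : ℝ) / j) ((k + 2 : ℝ) / j)) :
    ‖uj b₀ b₁ j y - uj b₀ b₁ j x‖ = ‖b₁ - b₀‖ := by
  have hj' : (0 : ℝ) < j := by exact_mod_cast hj
  have hfx : ⌊(j : ℝ) * x⌋ = (k : ℤ) := by
    rw [Int.floor_eq_iff]
    constructor
    · push_cast
      have := (div_lt_iff₀ hj').1 hx.1
      nlinarith
    · push_cast
      have := (lt_div_iff₀ hj').1 hx.2
      nlinarith
  have hfy : ⌊(j : ℝ) * y⌋ = (k : ℤ) + 1 := by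
    rw [Int.floor_eq_iff]
    constructor
    · push_cast
      have := (div_lt_iff₀ hj').1 hy.1
      nlinarith
    · push_cast
      have := (lt_div_iff₀ hj').1 hy.2
      nlinarith
  simp only [uj, hfx, hfy]
  rcases Int.even_or_odd (k : ℤ) with he | ho
  · rw [if_pos he, if_neg (fun h => (Int.even_add_one.mp h) he)]
  · rw [if_neg (Int.not_even_iff_odd.mpr ho),
      if_pos (Int.even_add_one.mpr (Int.not_even_iff_odd.mpr ho)), norm_sub_rev]

lemma f_eq {m : ℕ} (b₀ b₁ : EuclideanSpace ℝ (Fin m)) (p σ : ℝ) (hp : 0 < p) (hσ : 0 < σ)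
    (j k : ℕ) (hj : 0 < j) {x y : ℝ} (hx : x ∈ Ioo ((k : ℝ) / j) ((k + 1 : ℝ) / j))
    (hy : y ∈ Ioo ((k + 1 : ℝ) / j) ((k + 2 : ℝ) / j)) :
    (‖uj b₀ b₁ j y - uj b₀ b₁ j x‖₊ : ℝ≥0∞) ^ p / (‖y - x‖₊ : ℝ≥0∞) ^ (1 + σ) =
      ENNReal.ofReal (‖b₁ - b₀‖ ^ p * (y - x) ^ (-(1 + σ))) := by
  have hxy : 0 < y - x := by
    have h1 := hx.2
    have h2 := hy.1
    linarith
  have h1 : (‖y - x‖₊ : ℝ≥0∞) = ENNReal.ofReal (y - x) := by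
    rw [← enorm_eq_nnnorm, ← ofReal_norm, Real.norm_eq_abs, abs_of_pos hxy]
  have h2 : (‖uj b₀ b₁ j y - uj b₀ b₁ j x‖₊ : ℝ≥0∞) = ENNReal.ofReal ‖b₁ - b₀‖ := by
    rw [← enorm_eq_nnnorm, ← ofReal_norm, uj_norm_aux b₀ b₁ j k hj hx hy]
  rw [h1, h2, ENNReal.ofReal_rpow_of_nonneg (norm_nonneg _) hp.le,
    ENNReal.ofReal_rpow_of_pos hxy,
    ← ENNReal.ofReal_div_of_pos (Real.rpow_pos_of_pos hxy _)]
  congr 1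
  rw [Real.rpow_neg hxy.le, div_eq_mul_inv]

lemma inner_eval (σ : ℝ) (hσ : 0 < σ) (x a b : ℝ) (hxa : x < a) (hab : a < b) :
    ∫⁻ y in Ioo a b, ENNReal.ofReal ((y - x) ^ (-(1 + σ))) =
      ENNReal.ofReal (((a - x) ^ (-σ) - (b - x) ^ (-σ)) / σ) := by
  have hcont : ContinuousOn (fun y : ℝ => (y - x) ^ (-(1 + σ))) (Icc a b) := by
    apply ContinuousOn.rpow_const
    · exact (continuous_id.sub continuous_const).continuousOn
    · intro y hy
      left
      have : a ≤ y := hy.1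
      intro h
      nlinarith [sub_eq_zero.mp h]
  have hint : IntegrableOn (fun y : ℝ => (y - x) ^ (-(1 + σ))) (Ioo a b) :=
    (hcont.integrableOn_Icc).mono_set Ioo_subset_Icc_self
  have hnn : 0 ≤ᵐ[volume.restrict (Ioo a b)] fun y : ℝ => (y - x) ^ (-(1 + σ)) := by
    refine (ae_restrict_iff' measurableSet_Ioo).2 (ae_of_all _ fun y hy => ?_)
    have : 0 < y - x := by linarith [hy.1]
    positivity
  rw [← MeasureTheory.ofReal_integral_eq_lintegral_ofReal hint hnn]
  congr 1
  have h1 : ∫ y in Ioo a b, (y - x) ^ (-(1 + σ)) = ∫ y in a..b, (y - x) ^ (-(1 + σ)) := by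
    rw [intervalIntegral.integral_of_le hab.le, MeasureTheory.integral_Ioc_eq_integral_Ioo]
  have hnot : (0 : ℝ) ∉ Set.uIcc (a - x) (b - x) := by
    rw [Set.uIcc_of_le (by linarith)]
    intro h
    have := h.1
    linarith
  have hne : -(1 + σ) ≠ -1 := by intro h; nlinarith
  rw [h1, intervalIntegral.integral_comp_sub_right (fun t => t ^ (-(1 + σ))) x,
    integral_rpow (Or.inr ⟨hne, hnot⟩)]
  have he : -(1 + σ) + 1 = -σ := by ring
  rw [he, div_neg, ← neg_div, neg_sub]

lemma outer_eval (σ : ℝ) (hσ : 0 < σ) (hσ1 : σ < 1) (c h : ℝ) (hh : 0 < h) :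
    ∫⁻ x in Ioo c (c + h),
        ENNReal.ofReal (((c + h - x) ^ (-σ) - (c + 2 * h - x) ^ (-σ)) / σ) =
      ENNReal.ofReal (h ^ (1 - σ) * (2 - 2 ^ (1 - σ)) / (σ * (1 - σ))) := by
  have hσ0 : σ ≠ 0 := hσ.ne'
  have hσ1' : (1 : ℝ) - σ ≠ 0 := by linarith
  have hI1 : IntervalIntegrable (fun x : ℝ => (c + h - x) ^ (-σ)) volume c (c + h) := by
    have := (intervalIntegral.intervalIntegrable_rpow' (a := 0) (b := h) (r := -σ)
      (by linarith)).comp_sub_left (c + h)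
    simpa using this.symm
  have hI2 : IntervalIntegrable (fun x : ℝ => (c + 2 * h - x) ^ (-σ)) volume c (c + h) := by
    have := (intervalIntegral.intervalIntegrable_rpow' (a := h) (b := 2 * h) (r := -σ)
      (by linarith)).comp_sub_left (c + 2 * h)
    have e1 : c + 2 * h - 2 * h = c := by ring
    have e2 : c + 2 * h - h = c + h := by ring
    rw [e1, e2] at this
    exact this.symm
  have hI : IntervalIntegrable
      (fun x : ℝ => ((c + h - x) ^ (-σ) - (c + 2 * h - x) ^ (-σ)) / σ) volume c (c + h) :=
    (hI1.sub hI2).div_const σ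
  have hint : IntegrableOn
      (fun x : ℝ => ((c + h - x) ^ (-σ) - (c + 2 * h - x) ^ (-σ)) / σ) (Ioo c (c + h)) := by
    have := intervalIntegrable_iff.mp hI
    rw [uIoc_of_le (by linarith)] at this
    exact this.mono_set Ioo_subset_Ioc_self
  have hnn : 0 ≤ᵐ[volume.restrict (Ioo c (c + h))]
      fun x : ℝ => ((c + h - x) ^ (-σ) - (c + 2 * h - x) ^ (-σ)) / σ := by
    refine (ae_restrict_iff' measurableSet_Ioo).2 (ae_of_all _ fun x hx => ?_)
    have h1 : (0 : ℝ) < c + h - x := by linarith [hx.2]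
    have h2 : c + h - x ≤ c + 2 * h - x := by linarith
    have := Real.rpow_le_rpow_of_nonpos h1 h2 (by linarith : -σ ≤ 0)
    have : (0:ℝ) ≤ (c + h - x) ^ (-σ) - (c + 2 * h - x) ^ (-σ) := by linarith
    positivity
  rw [← MeasureTheory.ofReal_integral_eq_lintegral_ofReal hint hnn]
  congr 1
  have h1 : ∫ x in Ioo c (c + h), ((c + h - x) ^ (-σ) - (c + 2 * h - x) ^ (-σ)) / σ
      = ∫ x in c..(c + h), ((c + h - x) ^ (-σ) - (c + 2 * h - x) ^ (-σ)) / σ := by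
    rw [intervalIntegral.integral_of_le (by linarith), MeasureTheory.integral_Ioc_eq_integral_Ioo]
  have hv1 : ∫ x in c..(c + h), (c + h - x) ^ (-σ) = h ^ (1 - σ) / (1 - σ) := by
    rw [intervalIntegral.integral_comp_sub_left (fun t => t ^ (-σ)) (c + h)]
    have e1 : c + h - (c + h) = 0 := by ring
    have e2 : c + h - c = h := by ring
    rw [e1, e2, integral_rpow (Or.inl (by linarith))]
    rw [show -σ + 1 = 1 - σ by ring, Real.zero_rpow hσ1']
    ring
  have hv2 : ∫ x in c..(c + h), (c + 2 * h - x) ^ (-σ)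
      = ((2 * h) ^ (1 - σ) - h ^ (1 - σ)) / (1 - σ) := by
    rw [intervalIntegral.integral_comp_sub_left (fun t => t ^ (-σ)) (c + 2 * h)]
    have e1 : c + 2 * h - (c + h) = h := by ring
    have e2 : c + 2 * h - c = 2 * h := by ring
    rw [e1, e2, integral_rpow (Or.inl (by linarith))]
    rw [show -σ + 1 = 1 - σ by ring]
  rw [h1, intervalIntegral.integral_div, intervalIntegral.integral_sub hI1 hI2, hv1, hv2,
    Real.mul_rpow (by norm_num) hh.le]
  field_simp
  ring

lemma pair_bound (σ : ℝ) (hσ : 0 < σ) (hσ1 : σ < 1) (C : ℝ) (hC : 0 ≤ C)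
    (g : ℝ → ℝ → ℝ≥0∞) (c h : ℝ) (hh : 0 < h)
    (hg : ∀ x ∈ Ioo c (c + h), ∀ y ∈ Ioo (c + h) (c + 2 * h),
      g x y = ENNReal.ofReal (C * (y - x) ^ (-(1 + σ)))) :
    ENNReal.ofReal (C * (h ^ (1 - σ) * (2 - 2 ^ (1 - σ)) / (σ * (1 - σ))))
      ≤ ∫⁻ x in Ioo c (c + h), ∫⁻ y in Ioo (c + h) (c + 2 * h), g x y := by
  have key : ∫⁻ x in Ioo c (c + h), ∫⁻ y in Ioo (c + h) (c + 2 * h), g x y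
      = ENNReal.ofReal C * ENNReal.ofReal (h ^ (1 - σ) * (2 - 2 ^ (1 - σ)) / (σ * (1 - σ))) := by
    rw [← outer_eval σ hσ hσ1 c h hh, ← lintegral_const_mul' _ _ ENNReal.ofReal_ne_top]
    refine setLIntegral_congr_fun measurableSet_Ioo (fun x hx => ?_)
    calc ∫⁻ y in Ioo (c + h) (c + 2 * h), g x y
        = ∫⁻ y in Ioo (c + h) (c + 2 * h),
            ENNReal.ofReal C * ENNReal.ofReal ((y - x) ^ (-(1 + σ))) := by
          refine setLIntegral_congr_fun measurableSet_Ioo (fun y hy => ?_)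
          rw [hg x hx y hy, ENNReal.ofReal_mul hC]
      _ = ENNReal.ofReal C
            * ∫⁻ y in Ioo (c + h) (c + 2 * h), ENNReal.ofReal ((y - x) ^ (-(1 + σ))) :=
          lintegral_const_mul' _ _ ENNReal.ofReal_ne_top
      _ = ENNReal.ofReal C
            * ENNReal.ofReal (((c + h - x) ^ (-σ) - (c + 2 * h - x) ^ (-σ)) / σ) := by
          rw [inner_eval σ hσ x (c + h) (c + 2 * h) hx.2 (by linarith)]
  rw [key, ← ENNReal.ofReal_mul hC]

theorem stmt_10 (m : ℕ) (s p : ℝ) (hs : 0 < s) (hs1 : s < 1) (hp : 1 ≤ p) (hsp : s * p < 1)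
    (b₀ b₁ : EuclideanSpace ℝ (Fin m)) (j : ℕ) (hj : 1 ≤ j) :
    ENNReal.ofReal (2 * (1 - 1 / (j : ℝ)) * (j : ℝ) ^ (s * p) * (1 - (2 : ℝ) ^ (-(s * p)))
        * ‖b₁ - b₀‖ ^ p / (s * p * (1 - s * p)))
      ≤ ∫⁻ x in Set.Ioo (0 : ℝ) 1, ∫⁻ y in Set.Ioo (0 : ℝ) 1,
          (‖uj b₀ b₁ j y - uj b₀ b₁ j x‖₊ : ℝ≥0∞) ^ p / (‖y - x‖₊ : ℝ≥0∞) ^ (1 + s * p) := by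
  set σ := s * p with hσdef
  have hp0 : 0 < p := lt_of_lt_of_le one_pos hp
  have hσ : 0 < σ := mul_pos hs hp0
  have hσ1 : σ < 1 := hsp
  have hj0 : 0 < j := hj
  have hJ : (0 : ℝ) < (j : ℝ) := by exact_mod_cast hj0
  set C := ‖b₁ - b₀‖ ^ p with hCdef
  have hC : 0 ≤ C := Real.rpow_nonneg (norm_nonneg _) p
  set D := (1 / (j : ℝ)) ^ (1 - σ) * (2 - (2 : ℝ) ^ (1 - σ)) / (σ * (1 - σ)) with hDdef
  set t : ℕ → Set ℝ := fun k => Ioo ((k : ℝ) / j) (((k : ℝ) + 1) / j) with htdef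
  set F : ℝ → ℝ≥0∞ := fun x => ∫⁻ y in Ioo (0 : ℝ) 1,
      (‖uj b₀ b₁ j y - uj b₀ b₁ j x‖₊ : ℝ≥0∞) ^ p / (‖y - x‖₊ : ℝ≥0∞) ^ (1 + σ) with hFdef
  have hmain : ∀ k ∈ Finset.range (j - 1), ENNReal.ofReal (C * D) ≤ ∫⁻ x in t k, F x := by
    intro k hk
    have hk2 : k + 2 ≤ j := by have := Finset.mem_range.mp hk; omega
    have hk2' : ((k : ℝ) + 2) ≤ (j : ℝ) := by exact_mod_cast hk2
    have hh : (0 : ℝ) < 1 / (j : ℝ) := by positivity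
    have e1 : ((k : ℝ) + 1) / j = (k : ℝ) / j + 1 / j := by ring
    have e2 : ((k : ℝ) + 2) / j = (k : ℝ) / j + 2 * (1 / j) := by ring
    have hsubI : Ioo ((k : ℝ) / j + 1 / j) ((k : ℝ) / j + 2 * (1 / j)) ⊆ Ioo (0 : ℝ) 1 := by
      rw [← e1, ← e2]
      intro y hy
      have hb1 : (0 : ℝ) < ((k : ℝ) + 1) / j := by positivity
      have hb2 : ((k : ℝ) + 2) / j ≤ 1 := by rw [div_le_one hJ]; exact hk2'
      exact ⟨lt_of_lt_of_le hb1 hy.1.le, lt_of_lt_of_le hy.2 hb2⟩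
    show ENNReal.ofReal (C * D) ≤ ∫⁻ x in Ioo ((k : ℝ) / j) (((k : ℝ) + 1) / j), F x
    rw [e1]
    calc ENNReal.ofReal (C * D)
        ≤ ∫⁻ x in Ioo ((k : ℝ) / j) ((k : ℝ) / j + 1 / j),
            ∫⁻ y in Ioo ((k : ℝ) / j + 1 / j) ((k : ℝ) / j + 2 * (1 / j)),
              (‖uj b₀ b₁ j y - uj b₀ b₁ j x‖₊ : ℝ≥0∞) ^ p
                / (‖y - x‖₊ : ℝ≥0∞) ^ (1 + σ) := by
          refine pair_bound σ hσ hσ1 C hC _ ((k : ℝ) / j) (1 / j) hh ?_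
          intro x hx y hy
          rw [← e1] at hx
          rw [← e1, ← e2] at hy
          exact f_eq b₀ b₁ p σ hp0 hσ j k hj0 hx hy
      _ ≤ ∫⁻ x in Ioo ((k : ℝ) / j) ((k : ℝ) / j + 1 / j), F x :=
          lintegral_mono fun x => lintegral_mono_set hsubI
  have key : ∀ a b : ℕ, a < b → Disjoint (t a) (t b) := by
    intro a b hlt
    rw [Set.disjoint_left]
    intro x hxa hxb
    have h1 : x < ((a : ℝ) + 1) / j := hxa.2
    have h2 : ((b : ℝ)) / j < x := hxb.1
    have h3 : ((a : ℝ) + 1) ≤ (b : ℝ) := by exact_mod_cast hlt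
    have h4 : ((a : ℝ) + 1) / j ≤ (b : ℝ) / j := by gcongr
    linarith
  have hdisj : (↑(Finset.range (j - 1)) : Set ℕ).PairwiseDisjoint t := by
    intro a _ b _ hab
    rcases hab.lt_or_gt with hl | hl
    · exact key a b hl
    · exact (key b a hl).symm
  have hUsub : (⋃ k ∈ Finset.range (j - 1), t k) ⊆ Ioo (0 : ℝ) 1 := by
    refine Set.iUnion₂_subset fun k hk => ?_
    have hk1 : k + 1 ≤ j := by have := Finset.mem_range.mp hk; omega
    have hk1' : ((k : ℝ) + 1) ≤ (j : ℝ) := by exact_mod_cast hk1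
    intro x hx
    have hb1 : (0 : ℝ) ≤ (k : ℝ) / j := by positivity
    have hb2 : ((k : ℝ) + 1) / j ≤ 1 := by rw [div_le_one hJ]; exact hk1'
    exact ⟨lt_of_le_of_lt hb1 hx.1, lt_of_lt_of_le hx.2 hb2⟩
  have hcard : ((j - 1 : ℕ) : ℝ) = (j : ℝ) - 1 := by
    push_cast [Nat.cast_sub hj]
    ring
  have hre : 2 * (1 - 1 / (j : ℝ)) * (j : ℝ) ^ σ * (1 - (2 : ℝ) ^ (-σ)) * C / (σ * (1 - σ))
      = ((j - 1 : ℕ) : ℝ) * (C * D) := by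
    rw [hcard, hDdef]
    have A1 : (1 / (j : ℝ)) ^ (1 - σ) = (j : ℝ) ^ σ * ((j : ℝ))⁻¹ := by
      rw [one_div, Real.inv_rpow hJ.le, ← Real.rpow_neg hJ.le, show -(1 - σ) = σ + (-1) by ring,
        Real.rpow_add hJ, Real.rpow_neg_one]
    have A2 : (2 : ℝ) ^ (1 - σ) = 2 * 2 ^ (-σ) := by
      rw [show (1 : ℝ) - σ = 1 + (-σ) by ring, Real.rpow_add (by norm_num : (0:ℝ) < 2),
        Real.rpow_one]
    rw [A1, A2]
    have hσ0 : σ ≠ 0 := hσ.ne'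
    have hσ1' : (1 : ℝ) - σ ≠ 0 := by linarith
    field_simp
  calc ENNReal.ofReal (2 * (1 - 1 / (j : ℝ)) * (j : ℝ) ^ σ * (1 - (2 : ℝ) ^ (-σ)) * C
          / (σ * (1 - σ)))
      = ENNReal.ofReal (((j - 1 : ℕ) : ℝ) * (C * D)) := by rw [hre]
    _ = ((j - 1 : ℕ) : ℝ≥0∞) * ENNReal.ofReal (C * D) := by
        rw [ENNReal.ofReal_mul (by positivity), ENNReal.ofReal_natCast]
    _ = ∑ k ∈ Finset.range (j - 1), ENNReal.ofReal (C * D) := by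
        rw [Finset.sum_const, Finset.card_range, nsmul_eq_mul]
    _ ≤ ∑ k ∈ Finset.range (j - 1), ∫⁻ x in t k, F x := Finset.sum_le_sum hmain
    _ = ∫⁻ x in ⋃ k ∈ Finset.range (j - 1), t k, F x :=
        (lintegral_biUnion_finset hdisj (fun k _ => measurableSet_Ioo) F).symm
    _ ≤ ∫⁻ x in Ioo (0 : ℝ) 1, F x := lintegral_mono_set hUsub
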